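/- arXiv:2304.04206 — 2 statements merged into one kernel-verified Lean document; each statement's English description precedes it below -/
import Mathlib

section
/- If R is a weakly Noetherian commutative semiring, then the set of minimal k-prime ideals of R (minimal elements, with respect to inclusion, of the set of k-prime ideals of R) is finite. -/
variable {R : Type*} [CommSemiring R]

/-- An ideal `I` of a commutative semiring is a *k-ideal* (subtractive ideal) if
`a ∈ I` and `a + b ∈ I` imply `b ∈ I`. -/
def IsKIdeal (I : Ideal R) : Prop :=
  ∀ a b : R, a ∈ I → a + b ∈ I → b ∈ I

/-- A *k-prime* ideal: a proper k-ideal `P` such that for all k-ideals `I`, `J`,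
`I * J ≤ P` implies `I ≤ P` or `J ≤ P`. -/
def IsKPrime (P : Ideal R) : Prop :=
  IsKIdeal P ∧ P ≠ ⊤ ∧
    ∀ I J : Ideal R, IsKIdeal I → IsKIdeal J → I * J ≤ P → I ≤ P ∨ J ≤ P

/-- A commutative semiring is *weakly Noetherian* if every ascending chain of
k-ideals stabilizes. -/
def WeaklyNoetherian (R : Type*) [CommSemiring R] : Prop :=
  ∀ f : ℕ → Ideal R, (∀ n, IsKIdeal (f n)) → Monotone f →
    ∃ N : ℕ, ∀ n : ℕ, N ≤ n → f n = f N

/-- The k-closure of an ideal. -/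
def kcl (J : Ideal R) : Ideal R where
  carrier := {x | ∃ a ∈ J, a + x ∈ J}
  zero_mem' := ⟨0, J.zero_mem, by simp⟩
  add_mem' := by
    rintro x y ⟨a, ha, hax⟩ ⟨b, hb, hby⟩
    exact ⟨a + b, add_mem ha hb, by
      have : (a + x) + (b + y) ∈ J := add_mem hax hby
      convert this using 1; ring⟩
  smul_mem' := by
    rintro r x ⟨a, ha, hax⟩
    exact ⟨r * a, J.mul_mem_left r ha, by
      simp only [smul_eq_mul, ← mul_add]; exact J.mul_mem_left r hax⟩

lemma le_kcl (J : Ideal R) : J ≤ kcl J := fun x hx =>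
  ⟨0, J.zero_mem, by simpa using hx⟩

lemma kcl_isK (J : Ideal R) : IsKIdeal (kcl J) := by
  rintro x y ⟨a, ha, hax⟩ ⟨b, hb, hbxy⟩
  refine ⟨a + x + b, add_mem hax hb, ?_⟩
  have : (b + (x + y)) + a ∈ J := add_mem hbxy ha
  convert this using 1; ring

lemma kcl_le {J P : Ideal R} (hP : IsKIdeal P) (hJP : J ≤ P) : kcl J ≤ P := by
  rintro x ⟨a, ha, hax⟩
  exact hP a x (hJP ha) (hJP hax)

lemma mul_kcl_le {I J K : Ideal R} (hI : IsKIdeal I) (hJK : J * K ≤ I) :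
    kcl J * kcl K ≤ I := by
  rw [Ideal.mul_le]
  rintro x ⟨a, ha, hax⟩ y ⟨b, hb, hby⟩
  have h1 : (a + x) * (b + y) ∈ I := hJK (Ideal.mul_mem_mul hax hby)
  have h2 : a * b ∈ I := hJK (Ideal.mul_mem_mul ha hb)
  have h3 : (a + x) * b ∈ I := hJK (Ideal.mul_mem_mul hax hb)
  have h4 : a * (b + y) ∈ I := hJK (Ideal.mul_mem_mul ha hby)
  have hxb : x * b ∈ I := hI (a * b) (x * b) h2 (by rw [← add_mul]; exact h3)
  have hay : a * y ∈ I := hI (a * b) (a * y) h2 (by rw [← mul_add]; exact h4)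
  have h5 : a * b + x * b + a * y ∈ I := add_mem (add_mem h2 hxb) hay
  have h6 : (a * b + x * b + a * y) + x * y ∈ I := by
    convert h1 using 1; ring
  exact hI _ _ h5 h6

/-- `Good I`: `I` contains a finite product of k-primes containing `I`. -/
def Good (I : Ideal R) : Prop :=
  ∃ s : Multiset (Ideal R), (∀ P ∈ s, IsKPrime P ∧ I ≤ P) ∧ s.prod ≤ I

lemma prime_of_multiset_prod_le {P : Ideal R} (hP : IsKPrime P) :
    ∀ s : Multiset (Ideal R), (∀ Q ∈ s, IsKIdeal Q) → s.prod ≤ P → ∃ Q ∈ s, Q ≤ P := by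
  intro s
  induction s using Multiset.induction with
  | empty =>
      intro _ hle
      simp only [Multiset.prod_zero, Ideal.one_eq_top] at hle
      exact absurd (top_le_iff.mp hle) hP.2.1
  | cons a s ih =>
      intro hk hle
      rw [Multiset.prod_cons] at hle
      have hak : IsKIdeal a := hk a (Multiset.mem_cons_self a s)
      have h1 : a * kcl s.prod ≤ P := by
        have := mul_kcl_le hP.1 hle
        exact le_trans (Ideal.mul_mono (le_kcl a) le_rfl) this
      rcases hP.2.2 a (kcl s.prod) hak (kcl_isK _) h1 with h | h
      · exact ⟨a, Multiset.mem_cons_self a s, h⟩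
      · obtain ⟨Q, hQ, hQP⟩ := ih (fun Q hQ => hk Q (Multiset.mem_cons_of_mem hQ))
          (le_trans (le_kcl _) h)
        exact ⟨Q, Multiset.mem_cons_of_mem hQ, hQP⟩

lemma good_all (h : WeaklyNoetherian R) : ∀ I : Ideal R, IsKIdeal I → Good I := by
  have wf : WellFounded ((· > ·) : {I : Ideal R // IsKIdeal I} → _ → Prop) := by
    refine (wellFoundedGT_iff_monotone_chain_condition.2 ?_).wf
    intro a
    obtain ⟨N, hN⟩ := h (fun n => (a n).1) (fun n => (a n).2) (fun m n hmn => a.mono hmn)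
    exact ⟨N, fun m hm => Subtype.ext (hN m hm).symm⟩
  intro I hI
  induction' hwf : (⟨I, hI⟩ : {I : Ideal R // IsKIdeal I}) using wf.induction with x IH generalizing I
  obtain rfl : x = ⟨I, hI⟩ := hwf.symm
  by_cases htop : I = ⊤
  · exact ⟨0, by simp, by simp [htop]⟩
  by_cases hpr : IsKPrime I
  · exact ⟨{I}, by simp [hpr], by simp⟩
  · have : ¬ (∀ A B : Ideal R, IsKIdeal A → IsKIdeal B → A * B ≤ I → A ≤ I ∨ B ≤ I) := by
      intro hc; exact hpr ⟨hI, htop, hc⟩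
    push_neg at this
    obtain ⟨A, B, hA, hB, hAB, hAI, hBI⟩ := this
    set I₁ := kcl (I ⊔ A) with hI₁def
    set I₂ := kcl (I ⊔ B) with hI₂def
    have hI1k : IsKIdeal I₁ := kcl_isK _
    have hI2k : IsKIdeal I₂ := kcl_isK _
    have hII1 : I < I₁ := by
      refine lt_of_le_of_ne (le_trans le_sup_left (le_kcl _)) ?_
      intro hEq
      exact hAI (le_trans (le_trans le_sup_right (le_kcl _)) hEq.ge)
    have hII2 : I < I₂ := by
      refine lt_of_le_of_ne (le_trans le_sup_left (le_kcl _)) ?_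
      intro hEq
      exact hBI (le_trans (le_trans le_sup_right (le_kcl _)) hEq.ge)
    have hprod : I₁ * I₂ ≤ I := by
      apply mul_kcl_le hI
      rw [Ideal.sup_mul, Ideal.mul_sup, Ideal.mul_sup]
      exact sup_le (sup_le Ideal.mul_le_left Ideal.mul_le_left)
        (sup_le Ideal.mul_le_right hAB)
    obtain ⟨s, hs1, hs2⟩ : Good I₁ :=
      IH ⟨I₁, hI1k⟩ hII1 I₁ hI1k rfl
    obtain ⟨t, ht1, ht2⟩ : Good I₂ :=
      IH ⟨I₂, hI2k⟩ hII2 I₂ hI2k rfl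
    refine ⟨s + t, ?_, ?_⟩
    · intro P hP
      rcases Multiset.mem_add.mp hP with hP | hP
      · exact ⟨(hs1 P hP).1, le_trans hII1.le (hs1 P hP).2⟩
      · exact ⟨(ht1 P hP).1, le_trans hII2.le (ht1 P hP).2⟩
    · rw [Multiset.prod_add]
      exact le_trans (Ideal.mul_mono hs2 ht2) hprod

/-- In a weakly Noetherian commutative semiring, the set of minimal k-prime ideals
is finite. -/
theorem finite_minimal_kPrimes (R : Type*) [CommSemiring R] (h : WeaklyNoetherian R) :
    {P : Ideal R | IsKPrime P ∧ ∀ Q : Ideal R, IsKPrime Q → Q ≤ P → Q = P}.Finite := by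
  classical
  obtain ⟨s, hs1, hs2⟩ := good_all h (kcl (⊥ : Ideal R)) (kcl_isK _)
  apply Set.Finite.subset (s.toFinset : Finset (Ideal R)).finite_toSet
  rintro P ⟨hP, hmin⟩
  have hsP : s.prod ≤ P := le_trans hs2 (kcl_le hP.1 bot_le)
  obtain ⟨Q, hQ, hQP⟩ := prime_of_multiset_prod_le hP s (fun Q hQ => (hs1 Q hQ).1.1) hsP
  have := hmin Q (hs1 Q hQ).1 hQP
  simpa [← this] using Multiset.mem_toFinset.mpr hQ
end

section
/- A k-ideal I of a commutative semiring R is k-strongly irreducible if and only if for all a, b ∈ R, C_k(⟨a⟩) ∩ C_k(⟨b⟩) ⊆ I implies a ∈ I or b ∈ I, where ⟨a⟩ denotes the principal ideal generated by a. -/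
variable {R : Type*} [CommSemiring R]

/-- The *k-closure* of an ideal `I` of a commutative semiring:
the ideal `{r | r + x ∈ I for some x ∈ I}`. -/
def kClosure (I : Ideal R) : Ideal R where
  carrier := {r : R | ∃ x ∈ I, r + x ∈ I}
  zero_mem' := ⟨0, I.zero_mem, by simpa using I.zero_mem⟩
  add_mem' := by
    rintro a b ⟨x, hx, hax⟩ ⟨y, hy, hby⟩
    exact ⟨x + y, I.add_mem hx hy, by
      have h : a + b + (x + y) = (a + x) + (b + y) := by ring
      rw [h]; exact I.add_mem hax hby⟩
  smul_mem' := by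
    rintro c a ⟨x, hx, hax⟩
    exact ⟨c * x, I.mul_mem_left c hx, by
      have h : c • a + c * x = c * (a + x) := by rw [smul_eq_mul, mul_add]
      rw [h]; exact I.mul_mem_left c hax⟩

/-- A *k-strongly irreducible* ideal: a k-ideal `I` such that for all k-ideals `J`, `K`,
`J ⊓ K ≤ I` implies `J ≤ I` or `K ≤ I`. -/
def IsKStronglyIrreducible (I : Ideal R) : Prop :=
  IsKIdeal I ∧ ∀ J K : Ideal R, IsKIdeal J → IsKIdeal K → J ⊓ K ≤ I → J ≤ I ∨ K ≤ I


lemma mem_kClosure_iff {J : Ideal R} {r : R} :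
    r ∈ kClosure J ↔ ∃ x ∈ J, r + x ∈ J := Iff.rfl

lemma le_kClosure (J : Ideal R) : J ≤ kClosure J :=
  fun r hr => ⟨0, J.zero_mem, by simpa using hr⟩

lemma isKIdeal_kClosure (J : Ideal R) : IsKIdeal (kClosure J) := by
  rintro a b ⟨x, hx, hax⟩ ⟨y, hy, haby⟩
  exact ⟨a + x + y, J.add_mem hax hy, by
    have h : b + (a + x + y) = (a + b + y) + x := by ring
    rw [h]; exact J.add_mem haby hx⟩

lemma kClosure_le {J K : Ideal R} (hK : IsKIdeal K) (h : J ≤ K) : kClosure J ≤ K := by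
  rintro r ⟨x, hx, hrx⟩
  exact hK x r (h hx) (by rw [add_comm]; exact h hrx)

/-- A k-ideal `I` is k-strongly irreducible if and only if for all `a b : R`,
`C_k(⟨a⟩) ⊓ C_k(⟨b⟩) ⊆ I` implies `a ∈ I` or `b ∈ I`. -/
theorem isKStronglyIrreducible_iff_principal (I : Ideal R) (hI : IsKIdeal I) :
    IsKStronglyIrreducible I ↔
      ∀ a b : R, kClosure (Ideal.span {a}) ⊓ kClosure (Ideal.span {b}) ≤ I →
        a ∈ I ∨ b ∈ I := by
  constructor
  · rintro ⟨-, hIrr⟩ a b hab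
    rcases hIrr _ _ (isKIdeal_kClosure _) (isKIdeal_kClosure _) hab with h | h
    · exact Or.inl (h (le_kClosure _ (Ideal.subset_span rfl)))
    · exact Or.inr (h (le_kClosure _ (Ideal.subset_span rfl)))
  · intro h
    refine ⟨hI, fun J K hJ hK hJK => ?_⟩
    by_contra hc
    push_neg at hc
    obtain ⟨⟨a, haJ, haI⟩, ⟨b, hbK, hbI⟩⟩ :
        (∃ a ∈ J, a ∉ I) ∧ ∃ b ∈ K, b ∉ I := by
      constructor
      · simpa using (SetLike.not_le_iff_exists.mp hc.1)
      · simpa using (SetLike.not_le_iff_exists.mp hc.2)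
    have hsub : kClosure (Ideal.span {a}) ⊓ kClosure (Ideal.span {b}) ≤ I := by
      refine le_trans (le_inf ?_ ?_) hJK
      · exact le_trans inf_le_left
          (kClosure_le hJ (Ideal.span_le.mpr (by simpa using haJ)))
      · exact le_trans inf_le_right
          (kClosure_le hK (Ideal.span_le.mpr (by simpa using hbK)))
    rcases h a b hsub with h' | h'
    · exact haI h'
    · exact hbI h'
end
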